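/- Let G be a finite group, n a positive integer, and k a field such that char k does not divide n − 1 or does not divide n − |G|. Then any unital k-algebra Q admitting a comeasuring of Frobenius algebras from M_n(k) to the Frobenius group algebra k[G], or from k[G] to M_n(k), is the zero algebra. -/

import Mathlib

open TensorProduct

/-- A comeasuring of Frobenius algebras from `(A, Δ_A, ν_A)` to `(B, Δ_B, ν_B)` with
coefficient algebra `Q`: a linear map `ρ : A → B ⊗ Q`, `ρ(a) = a⁽⁰⁾ ⊗ a⁽¹⁾`, which is an
algebra map and satisfies
`a^{(1)[0]} ⊗ a^{(2)[0]} ⊗ a^{(1)[1]}a^{(2)[1]} = a^{[0](1)} ⊗ a^{[0](2)} ⊗ a^{[1]}`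
and `ν_B(a⁽⁰⁾)a⁽¹⁾ = ν_A(a)1_Q`. -/
def IsFrobComeasuring {k A B Q : Type*} [CommRing k] [Ring A] [Algebra k A]
    [Ring B] [Algebra k B] [Ring Q] [Algebra k Q]
    (ΔA : A →ₗ[k] A ⊗[k] A) (νA : A →ₗ[k] k)
    (ΔB : B →ₗ[k] B ⊗[k] B) (νB : B →ₗ[k] k)
    (ρ : A →ₗ[k] B ⊗[k] Q) : Prop :=
  (∀ a a' : A, ρ (a * a') = ρ a * ρ a') ∧
  (ρ 1 = 1) ∧
  (∀ a : A,
    TensorProduct.map (LinearMap.id : B ⊗[k] B →ₗ[k] B ⊗[k] B) (LinearMap.mul' k Q)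
        (TensorProduct.tensorTensorTensorComm k B Q B Q
          (TensorProduct.map ρ ρ (ΔA a)))
      = TensorProduct.map ΔB (LinearMap.id : Q →ₗ[k] Q) (ρ a)) ∧
  (∀ a : A,
    TensorProduct.lid k Q
        (TensorProduct.map νB (LinearMap.id : Q →ₗ[k] Q) (ρ a)) = νA a • (1 : Q))

section GroupFrobenius

variable (k : Type*) [Field k] (G : Type*) [Group G] [Fintype G] [DecidableEq G]

/-- The Frobenius comultiplication `Δ(g) = Σ_{h ∈ G} gh⁻¹ ⊗ h` on a finite group
algebra. -/
noncomputable def groupComul :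
    MonoidAlgebra k G →ₗ[k] MonoidAlgebra k G ⊗[k] MonoidAlgebra k G :=
  (Finsupp.lsum k fun g =>
    LinearMap.toSpanSingleton k (MonoidAlgebra k G ⊗[k] MonoidAlgebra k G)
      (∑ h : G, MonoidAlgebra.single (g * h⁻¹) (1 : k) ⊗ₜ[k] MonoidAlgebra.single h (1 : k)))
      ∘ₗ (MonoidAlgebra.coeffLinearEquiv k).toLinearMap

/-- The Frobenius counit `ν(g) = δ_{g,1}` on a finite group algebra. -/
noncomputable def groupCounit : MonoidAlgebra k G →ₗ[k] k :=
  Finsupp.lapply (1 : G) ∘ₗ (MonoidAlgebra.coeffLinearEquiv k).toLinearMap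

end GroupFrobenius

section MatrixFrobenius

variable (k : Type*) [Field k] (n : ℕ)

/-- The Frobenius comultiplication `Δ(E_{ij}) = Σ_l E_{il} ⊗ E_{lj}` on the matrix
algebra `M_n(k)`. -/
noncomputable def matrixComul :
    Matrix (Fin n) (Fin n) k →ₗ[k]
      Matrix (Fin n) (Fin n) k ⊗[k] Matrix (Fin n) (Fin n) k where
  toFun M := ∑ i : Fin n, ∑ j : Fin n, ∑ l : Fin n,
    M i j • (Matrix.single i l (1 : k) ⊗ₜ[k] Matrix.single l j (1 : k))
  map_add' M N := by
    simp [Matrix.add_apply, add_smul, Finset.sum_add_distrib]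
  map_smul' c M := by
    simp [Matrix.smul_apply, smul_smul, Finset.smul_sum]

/-- The Frobenius counit on `M_n(k)` : the trace, `ν(E_{ij}) = δ_{ij}`. -/
noncomputable def matrixCounit : Matrix (Fin n) (Fin n) k →ₗ[k] k :=
  Matrix.traceLinearMap (Fin n) k k

end MatrixFrobenius

section Aux

variable {k B Q : Type*} [CommRing k] [Ring B] [Algebra k B] [Ring Q] [Algebra k Q]

set_option synthInstance.maxHeartbeats 1000000 in
lemma psi_mul (u v : B ⊗[k] Q) :
    TensorProduct.map (LinearMap.mul' k B) (LinearMap.id : Q →ₗ[k] Q)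
      (TensorProduct.map (LinearMap.id : B ⊗[k] B →ₗ[k] B ⊗[k] B) (LinearMap.mul' k Q)
        (TensorProduct.tensorTensorTensorComm k B Q B Q (u ⊗ₜ[k] v))) = u * v := by
  induction u using TensorProduct.induction_on with
  | zero => simp
  | tmul b q =>
    induction v using TensorProduct.induction_on with
    | zero => simp
    | tmul b' q' =>
      simp [Algebra.TensorProduct.tmul_mul_tmul]
    | add x y hx hy =>
      simp only [tmul_add, map_add, hx, hy, mul_add]
  | add x y hx hy =>
    simp only [add_tmul, map_add, hx, hy, add_mul]

set_option synthInstance.maxHeartbeats 1000000 in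
lemma comeasuring_scalars {A : Type*} [Ring A] [Algebra k A]
    (ΔA : A →ₗ[k] A ⊗[k] A) (νA : A →ₗ[k] k)
    (ΔB : B →ₗ[k] B ⊗[k] B) (νB : B →ₗ[k] k)
    (ρ : A →ₗ[k] B ⊗[k] Q) (h : IsFrobComeasuring ΔA νA ΔB νB ρ) :
    νB 1 • (1 : Q) = νA 1 • (1 : Q) ∧
      νA (LinearMap.mul' k A (ΔA 1)) • (1 : Q)
        = νB (LinearMap.mul' k B (ΔB 1)) • (1 : Q) := by
  obtain ⟨hmul, hone, hΔ, hν⟩ := h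
  constructor
  · have h1 := hν 1
    rw [hone, Algebra.TensorProduct.one_def] at h1
    simpa using h1
  · have key : ∀ t : A ⊗[k] A,
        TensorProduct.map (LinearMap.mul' k B) (LinearMap.id : Q →ₗ[k] Q)
          (TensorProduct.map (LinearMap.id : B ⊗[k] B →ₗ[k] B ⊗[k] B) (LinearMap.mul' k Q)
            (TensorProduct.tensorTensorTensorComm k B Q B Q (TensorProduct.map ρ ρ t)))
        = ρ (LinearMap.mul' k A t) := by
      intro t
      induction t using TensorProduct.induction_on with
      | zero => simp
      | tmul x y =>
        rw [TensorProduct.map_tmul, psi_mul, LinearMap.mul'_apply, hmul]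
      | add x y hx hy => simp only [map_add, hx, hy]
    have h1 := congrArg
      (TensorProduct.map (LinearMap.mul' k B) (LinearMap.id : Q →ₗ[k] Q)) (hΔ 1)
    rw [key, hone, Algebra.TensorProduct.one_def] at h1
    have h2 := hν (LinearMap.mul' k A (ΔA 1))
    rw [h1] at h2
    simpa using h2.symm

end Aux

section Scalars

variable (k : Type*) [Field k] (G : Type*) [Group G] [Fintype G] [DecidableEq G] (n : ℕ)

lemma matrixCounit_one : matrixCounit k n 1 = (n : k) := by
  simp [matrixCounit]

lemma groupCounit_one : groupCounit k G 1 = 1 := by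
  simp [groupCounit, MonoidAlgebra.one_def]

lemma matrix_casimir :
    matrixCounit k n (LinearMap.mul' k _ (matrixComul k n 1)) = (n : k) ^ 2 := by
  have h1 : matrixComul k n 1 = ∑ i : Fin n, ∑ j : Fin n, ∑ l : Fin n,
      (1 : Matrix (Fin n) (Fin n) k) i j •
        (Matrix.single i l (1 : k) ⊗ₜ[k] Matrix.single l j (1 : k)) := rfl
  rw [h1]
  simp only [map_sum, map_smul, LinearMap.mul'_apply,
    Matrix.single_mul_single_same, one_mul, Matrix.one_apply]
  simp [matrixCounit, Matrix.trace, Matrix.diag, Matrix.single, Matrix.of_apply,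
    Finset.sum_ite_eq, sq, Finset.filter_eq, Finset.card_univ, mul_comm]

lemma group_casimir :
    groupCounit k G (LinearMap.mul' k _ (groupComul k G 1)) = (Fintype.card G : k) := by
  have h1 : (1 : MonoidAlgebra k G) = MonoidAlgebra.single (1 : G) (1 : k) := rfl
  rw [h1]
  have h2 : groupComul k G (MonoidAlgebra.single (1 : G) (1 : k))
      = ∑ h : G, MonoidAlgebra.single ((1 : G) * h⁻¹) (1 : k) ⊗ₜ[k]
          MonoidAlgebra.single h (1 : k) := by
    simp [groupComul, LinearMap.toSpanSingleton_apply]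
  rw [h2]
  simp only [map_sum, LinearMap.mul'_apply, MonoidAlgebra.single_mul_single,
    one_mul, inv_mul_cancel]
  have h3 : ∑ _x : G, (1 : k) = (Fintype.card G : k) := by
    simp [Finset.card_univ]
  rw [← h3]
  exact Finset.sum_congr rfl fun x _ => by simp [groupCounit]

end Scalars

/-- Let `G` be a finite group, `n` a positive integer and `k` a field such that `char k`
does not divide `n − 1` or does not divide `n − |G|`. Then any unital `k`-algebra `Q`
admitting a comeasuring of Frobenius algebras from `M_n(k)` to `k[G]`, or from `k[G]` to
`M_n(k)`, is the zero algebra. -/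
theorem group_matrix_comeasuring_trivial {k : Type*} [Field k]
    {G : Type*} [Group G] [Fintype G] [DecidableEq G] {n : ℕ} (hn : 0 < n)
    (hchar : ¬ ((ringChar k : ℤ) ∣ (n : ℤ) - 1) ∨
      ¬ ((ringChar k : ℤ) ∣ (n : ℤ) - (Fintype.card G : ℤ)))
    (Q : Type*) [Ring Q] [Algebra k Q]
    (hex : (∃ ρ : Matrix (Fin n) (Fin n) k →ₗ[k] MonoidAlgebra k G ⊗[k] Q,
              IsFrobComeasuring (matrixComul k n) (matrixCounit k n)
                (groupComul k G) (groupCounit k G) ρ) ∨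
           (∃ ρ : MonoidAlgebra k G →ₗ[k] Matrix (Fin n) (Fin n) k ⊗[k] Q,
              IsFrobComeasuring (groupComul k G) (groupCounit k G)
                (matrixComul k n) (matrixCounit k n) ρ)) :
    Subsingleton Q  := by
  have hd1 : ((n : k) - 1) • (1 : Q) = 0 ∧
      ((n : k) ^ 2 - (Fintype.card G : k)) • (1 : Q) = 0 := by
    rcases hex with ⟨ρ, hρ⟩ | ⟨ρ, hρ⟩
    · obtain ⟨e1, e2⟩ := comeasuring_scalars _ _ _ _ ρ hρ
      rw [matrixCounit_one, groupCounit_one] at e1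
      rw [matrix_casimir, group_casimir] at e2
      constructor
      · rw [sub_smul, e1.symm, one_smul, sub_self]
      · rw [sub_smul, e2, sub_self]
    · obtain ⟨e1, e2⟩ := comeasuring_scalars _ _ _ _ ρ hρ
      rw [matrixCounit_one, groupCounit_one] at e1
      rw [matrix_casimir, group_casimir] at e2
      constructor
      · rw [sub_smul, e1, one_smul, sub_self]
      · rw [sub_smul, e2.symm, sub_self]
  obtain ⟨hd1, hd2⟩ := hd1
  have hex2 : ∃ c : k, c ≠ 0 ∧ c • (1 : Q) = 0 := by
    haveI : CharP k (ringChar k) := ringChar.charP k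
    rcases hchar with hc | hc
    · refine ⟨(n : k) - 1, ?_, hd1⟩
      intro h0
      apply hc
      rw [← CharP.intCast_eq_zero_iff k (ringChar k)]
      push_cast
      exact h0
    · refine ⟨(n : k) - (Fintype.card G : k), ?_, ?_⟩
      · intro h0
        apply hc
        rw [← CharP.intCast_eq_zero_iff k (ringChar k)]
        push_cast
        exact h0
      · have key : (n : k) - (Fintype.card G : k)
            = ((n : k) ^ 2 - (Fintype.card G : k)) - (n : k) * ((n : k) - 1) := by ring
        rw [key, sub_smul, hd2, mul_smul, hd1, smul_zero, sub_self]
  obtain ⟨c, hc0, hc1⟩ := hex2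
  have h10 : (1 : Q) = 0 := by
    have := congrArg (fun x : Q => c⁻¹ • x) hc1
    simpa [smul_smul, inv_mul_cancel₀ hc0] using this
  exact subsingleton_of_zero_eq_one h10.symm
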